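/- For fixed complex parameters ℓ and η, define c_ℓ(ζ) = θ₁(2ζ − 2ℓη)/θ₁(2ζ) and ρ_ℓ(ζ) = c_ℓ(ζ)·c_ℓ(−ζ−η). Then for all complex ζ and x where denominators are nonzero: ρ_ℓ(ζ) − ρ_ℓ(x) = θ₁(2ℓη)·θ₁(2(ℓ+1)η)·θ₁(2ζ−2x)·θ₁(2ζ+2x+2η) / (θ₁(2x)·θ₁(2x+2η)·θ₁(2ζ)·θ₁(2ζ+2η)). -/

import Mathlib

open Complex

noncomputable def theta1 (τ z : ℂ) : ℂ :=
  ∑' k : ℤ, Complex.exp (Real.pi * Complex.I * τ * (k + 1/2)^2 +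
    2 * Real.pi * Complex.I * (z + 1/2) * (k + 1/2))

noncomputable def theta2 (τ z : ℂ) : ℂ :=
  ∑' k : ℤ, Complex.exp (Real.pi * Complex.I * τ * (k + 1/2)^2 +
    2 * Real.pi * Complex.I * z * (k + 1/2))

noncomputable def theta3 (τ z : ℂ) : ℂ :=
  ∑' k : ℤ, Complex.exp (Real.pi * Complex.I * τ * k^2 +
    2 * Real.pi * Complex.I * z * k)

noncomputable def theta4 (τ z : ℂ) : ℂ :=
  ∑' k : ℤ, Complex.exp (Real.pi * Complex.I * τ * k^2 +
    2 * Real.pi * Complex.I * (z + 1/2) * k)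


noncomputable def T2 (τ z : ℂ) (k : ℤ) : ℂ :=
  Complex.exp (Real.pi * Complex.I * τ * (k + 1/2)^2 +
    2 * Real.pi * Complex.I * z * (k + 1/2))

noncomputable def T3 (τ z : ℂ) (k : ℤ) : ℂ :=
  Complex.exp (Real.pi * Complex.I * τ * k^2 +
    2 * Real.pi * Complex.I * z * k)

noncomputable def T1 (τ z : ℂ) (k : ℤ) : ℂ := T2 τ (z + 1/2) k

lemma sumT3 (τ z : ℂ) (hτ : 0 < τ.im) : Summable (T3 τ z) := by
  have h := (summable_jacobiTheta₂_term_iff z τ).mpr hτ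
  refine h.congr fun k => ?_
  rw [jacobiTheta₂_term, T3]
  congr 1
  push_cast
  ring

lemma sumT2 (τ z : ℂ) (hτ : 0 < τ.im) : Summable (T2 τ z) := by
  have h := ((summable_jacobiTheta₂_term_iff (z + τ/2) τ).mpr hτ).mul_left
    (Complex.exp (Real.pi * Complex.I * τ / 4 + Real.pi * Complex.I * z))
  refine h.congr fun k => ?_
  rw [jacobiTheta₂_term, T2, ← Complex.exp_add]
  congr 1
  push_cast
  ring

lemma sumT1 (τ z : ℂ) (hτ : 0 < τ.im) : Summable (T1 τ z) := sumT2 τ (z + 1/2) hτ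

def sEven : Set (ℤ × ℤ) := {mn | Even (mn.1 + mn.2)}

def eEven : (ℤ × ℤ) ≃ sEven where
  toFun pq := ⟨(pq.1 + pq.2, pq.1 - pq.2), ⟨pq.1, by dsimp; ring⟩⟩
  invFun x := ((x.1.1 + x.1.2) / 2, (x.1.1 - x.1.2) / 2)
  left_inv := by rintro ⟨p, q⟩; refine Prod.ext ?_ ?_ <;> dsimp <;> omega
  right_inv := by
    rintro ⟨⟨m, n⟩, h⟩
    apply Subtype.ext
    have h' : (m + n) % 2 = 0 := by
      have := h.out; rw [Int.even_iff] at this; simpa using this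
    refine Prod.ext ?_ ?_ <;> dsimp <;> omega

def eOdd : (ℤ × ℤ) ≃ (sEvenᶜ : Set (ℤ × ℤ)) where
  toFun pq := ⟨(pq.1 + pq.2, pq.1 - pq.2 - 1), by
    intro h
    have h' := h.out
    rw [Int.even_iff] at h'
    omega⟩
  invFun x := ((x.1.1 + x.1.2 + 1) / 2, (x.1.1 - x.1.2 - 1) / 2)
  left_inv := by rintro ⟨p, q⟩; refine Prod.ext ?_ ?_ <;> dsimp <;> omega
  right_inv := by
    rintro ⟨⟨m, n⟩, h⟩
    apply Subtype.ext
    have h' : (m + n) % 2 = 1 := by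
      have : ¬ Even (m + n) := h
      rw [Int.even_iff] at this; omega
    refine Prod.ext ?_ ?_ <;> dsimp <;> omega




lemma hs1 (τ z : ℂ) (hτ : 0 < τ.im) : HasSum (T1 τ z) (theta1 τ z) :=
  (sumT1 τ z hτ).hasSum

lemma hs2 (τ z : ℂ) (hτ : 0 < τ.im) : HasSum (T2 τ z) (theta2 τ z) :=
  (sumT2 τ z hτ).hasSum

lemma hs3 (τ z : ℂ) (hτ : 0 < τ.im) : HasSum (T3 τ z) (theta3 τ z) :=
  (sumT3 τ z hτ).hasSum

lemma exp_shift_one (A B : ℂ) (n : ℤ) (h : A = B + n * (2 * Real.pi * Complex.I)) :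
    Complex.exp A = Complex.exp B := by
  rw [h, Complex.exp_add, Complex.exp_int_mul_two_pi_mul_I, mul_one]

lemma exp_shift_neg (A B : ℂ) (n : ℤ) (h : A = B + n * (2 * Real.pi * Complex.I) + Real.pi * Complex.I) :
    Complex.exp A = -Complex.exp B := by
  rw [h, Complex.exp_add, Complex.exp_add, Complex.exp_int_mul_two_pi_mul_I,
    Complex.exp_pi_mul_I]
  ring

lemma bracket (τ : ℂ) (hτ : 0 < τ.im) (u v : ℂ) :
    theta1 τ (u + v) * theta1 τ (u - v) =
      theta3 (2*τ) (2*u) * theta2 (2*τ) (2*v) - theta2 (2*τ) (2*u) * theta3 (2*τ) (2*v) := by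
  have h2τ : 0 < (2*τ).im := by
    have : (2*τ).im = 2 * τ.im := by simp
    rw [this]; linarith
  set f : ℤ × ℤ → ℂ := fun mn => T1 τ (u+v) mn.1 * T1 τ (u-v) mn.2 with hf
  have hprod : HasSum f (theta1 τ (u+v) * theta1 τ (u-v)) :=
    (hs1 τ (u+v) hτ).mul (hs1 τ (u-v) hτ)
      (summable_mul_of_summable_norm (sumT1 τ (u+v) hτ).norm (sumT1 τ (u-v) hτ).norm)
  -- even class: (m,n) = (p+q, p-q), value -(θ₂(2u)θ₃(2v))
  have baseE : HasSum (fun pq : ℤ × ℤ => T2 (2*τ) (2*u) pq.1 * T3 (2*τ) (2*v) pq.2)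
      (theta2 (2*τ) (2*u) * theta3 (2*τ) (2*v)) :=
    (hs2 (2*τ) (2*u) h2τ).mul (hs3 (2*τ) (2*v) h2τ)
      (summable_mul_of_summable_norm (sumT2 (2*τ) (2*u) h2τ).norm (sumT3 (2*τ) (2*v) h2τ).norm)
  have eqE : (fun pq : ℤ × ℤ => f (pq.1 + pq.2, pq.1 - pq.2)) =
      fun pq : ℤ × ℤ => -(T2 (2*τ) (2*u) pq.1 * T3 (2*τ) (2*v) pq.2) := by
    funext pq
    obtain ⟨p, q⟩ := pq
    show T1 τ (u+v) (p+q) * T1 τ (u-v) (p-q) = -(T2 (2*τ) (2*u) p * T3 (2*τ) (2*v) q)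
    rw [T1, T1, T2, T2, T2, T3, ← Complex.exp_add, ← Complex.exp_add]
    apply exp_shift_neg _ _ p
    push_cast
    ring
  have hsE : HasSum (f ∘ ((↑) : sEven → ℤ × ℤ))
      (-(theta2 (2*τ) (2*u) * theta3 (2*τ) (2*v))) := by
    apply (Equiv.hasSum_iff eEven).mp
    have : (f ∘ ((↑) : sEven → ℤ × ℤ)) ∘ eEven =
        fun pq : ℤ × ℤ => f (pq.1 + pq.2, pq.1 - pq.2) := rfl
    rw [this, eqE]
    exact baseE.neg
  -- odd class: (m,n) = (p+q, p-q-1), value θ₃(2u)θ₂(2v)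
  have baseO : HasSum (fun pq : ℤ × ℤ => T3 (2*τ) (2*u) pq.1 * T2 (2*τ) (2*v) pq.2)
      (theta3 (2*τ) (2*u) * theta2 (2*τ) (2*v)) :=
    (hs3 (2*τ) (2*u) h2τ).mul (hs2 (2*τ) (2*v) h2τ)
      (summable_mul_of_summable_norm (sumT3 (2*τ) (2*u) h2τ).norm (sumT2 (2*τ) (2*v) h2τ).norm)
  have eqO : (fun pq : ℤ × ℤ => f (pq.1 + pq.2, pq.1 - pq.2 - 1)) =
      fun pq : ℤ × ℤ => T3 (2*τ) (2*u) pq.1 * T2 (2*τ) (2*v) pq.2 := by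
    funext pq
    obtain ⟨p, q⟩ := pq
    show T1 τ (u+v) (p+q) * T1 τ (u-v) (p-q-1) = T3 (2*τ) (2*u) p * T2 (2*τ) (2*v) q
    rw [T1, T1, T2, T2, T2, T3, ← Complex.exp_add, ← Complex.exp_add]
    apply exp_shift_one _ _ p
    push_cast
    ring
  have hsO : HasSum (f ∘ ((↑) : (sEvenᶜ : Set (ℤ × ℤ)) → ℤ × ℤ))
      (theta3 (2*τ) (2*u) * theta2 (2*τ) (2*v)) := by
    apply (Equiv.hasSum_iff eOdd).mp
    have : (f ∘ ((↑) : (sEvenᶜ : Set (ℤ × ℤ)) → ℤ × ℤ)) ∘ eOdd =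
        fun pq : ℤ × ℤ => f (pq.1 + pq.2, pq.1 - pq.2 - 1) := rfl
    rw [this, eqO]
    exact baseO
  have total : HasSum f (-(theta2 (2*τ) (2*u) * theta3 (2*τ) (2*v)) +
      theta3 (2*τ) (2*u) * theta2 (2*τ) (2*v)) := hsE.add_compl hsO
  rw [hprod.unique total]
  ring

lemma theta3_even (τ z : ℂ) : theta3 τ (-z) = theta3 τ z := by
  rw [theta3, theta3,
    ← (Equiv.neg ℤ).tsum_eq (fun k : ℤ => Complex.exp (Real.pi * Complex.I * τ * (k:ℂ)^2 +
      2 * Real.pi * Complex.I * z * (k:ℂ)))]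
  refine tsum_congr fun k => ?_
  simp only [Equiv.neg_apply]
  congr 1
  push_cast
  ring

lemma theta2_even (τ z : ℂ) : theta2 τ (-z) = theta2 τ z := by
  rw [theta2, theta2,
    ← ((Equiv.addRight (1:ℤ)).trans (Equiv.neg ℤ)).tsum_eq
      (fun k : ℤ => Complex.exp (Real.pi * Complex.I * τ * ((k:ℂ) + 1/2)^2 +
        2 * Real.pi * Complex.I * z * ((k:ℂ) + 1/2)))]
  refine tsum_congr fun k => ?_
  simp only [Equiv.trans_apply, Equiv.coe_addRight, Equiv.neg_apply]
  congr 1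
  push_cast
  ring

lemma bracket' (τ : ℂ) (hτ : 0 < τ.im) (a b u v : ℂ) (ha : a = u + v) (hb : b = u - v) :
    theta1 τ a * theta1 τ b =
      theta3 (2*τ) (2*u) * theta2 (2*τ) (2*v) - theta2 (2*τ) (2*u) * theta3 (2*τ) (2*v) := by
  rw [ha, hb]; exact bracket τ hτ u v

/-- version with `u` negated, using evenness -/
lemma bracketN (τ : ℂ) (hτ : 0 < τ.im) (a b u v : ℂ) (ha : a = -u + v) (hb : b = -u - v) :
    theta1 τ a * theta1 τ b =
      theta3 (2*τ) (2*u) * theta2 (2*τ) (2*v) - theta2 (2*τ) (2*u) * theta3 (2*τ) (2*v) := by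
  rw [bracket' τ hτ a b (-u) v ha hb, show 2*(-u) = -(2*u) by ring, theta3_even, theta2_even]

/-- version with `v` negated, using evenness -/
lemma bracketVN (τ : ℂ) (hτ : 0 < τ.im) (a b u v : ℂ) (ha : a = u - v) (hb : b = u + v) :
    theta1 τ a * theta1 τ b =
      theta3 (2*τ) (2*u) * theta2 (2*τ) (2*v) - theta2 (2*τ) (2*u) * theta3 (2*τ) (2*v) := by
  rw [bracket' τ hτ a b u (-v) (by rw [ha]; ring) (by rw [hb]; ring),
    show 2*(-v) = -(2*v) by ring, theta3_even, theta2_even]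


theorem rho_difference_identity (τ : ℂ) (hτ : 0 < τ.im) (ℓ η ζ x : ℂ)
    (c : ℂ → ℂ) (ρ : ℂ → ℂ)
    (hc : ∀ w, c w = theta1 τ (2*w - 2*ℓ*η) / theta1 τ (2*w))
    (hρ : ∀ w, ρ w = c w * c (-w - η))
    (h1 : theta1 τ (2*ζ) ≠ 0) (h2 : theta1 τ (2*ζ+2*η) ≠ 0)
    (h3 : theta1 τ (2*x) ≠ 0) (h4 : theta1 τ (2*x+2*η) ≠ 0)
    (h5 : theta1 τ (2*(-ζ-η)) ≠ 0) (h6 : theta1 τ (2*(-x-η)) ≠ 0) :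
    ρ ζ - ρ x =
      theta1 τ (2*ℓ*η) * theta1 τ (2*(ℓ+1)*η) * theta1 τ (2*ζ-2*x) *
        theta1 τ (2*ζ+2*x+2*η) /
      (theta1 τ (2*x) * theta1 τ (2*x+2*η) * theta1 τ (2*ζ) * theta1 τ (2*ζ+2*η)) := by
  have Bnζ := bracketN τ hτ (2*ζ - 2*ℓ*η) (2*(-ζ - η) - 2*ℓ*η) ((2*ℓ+1)*η) (2*ζ+η)
    (by ring) (by ring)
  have Bdζ := bracketN τ hτ (2*ζ) (2*(-ζ - η)) η (2*ζ+η) (by ring) (by ring)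
  have Bnx := bracketN τ hτ (2*x - 2*ℓ*η) (2*(-x - η) - 2*ℓ*η) ((2*ℓ+1)*η) (2*x+η)
    (by ring) (by ring)
  have Bdx := bracketN τ hτ (2*x) (2*(-x - η)) η (2*x+η) (by ring) (by ring)
  have B5 := bracketVN τ hτ (2*ℓ*η) (2*(ℓ+1)*η) ((2*ℓ+1)*η) η (by ring) (by ring)
  have B6 := bracketVN τ hτ (2*ζ-2*x) (2*ζ+2*x+2*η) (2*ζ+η) (2*x+η) (by ring) (by ring)
  have B7 := bracketVN τ hτ (2*x) (2*x+2*η) (2*x+η) η (by ring) (by ring)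
  have B8 := bracketVN τ hτ (2*ζ) (2*ζ+2*η) (2*ζ+η) η (by ring) (by ring)
  have hd1 : theta3 (2*τ) (2*η) * theta2 (2*τ) (2*(2*ζ+η)) -
      theta2 (2*τ) (2*η) * theta3 (2*τ) (2*(2*ζ+η)) ≠ 0 := by
    rw [← Bdζ]; exact mul_ne_zero h1 h5
  have hd2 : theta3 (2*τ) (2*η) * theta2 (2*τ) (2*(2*x+η)) -
      theta2 (2*τ) (2*η) * theta3 (2*τ) (2*(2*x+η)) ≠ 0 := by
    rw [← Bdx]; exact mul_ne_zero h3 h6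
  have hd3 : theta3 (2*τ) (2*(2*x+η)) * theta2 (2*τ) (2*η) -
      theta2 (2*τ) (2*(2*x+η)) * theta3 (2*τ) (2*η) ≠ 0 := by
    rw [← B7]; exact mul_ne_zero h3 h4
  have hd4 : theta3 (2*τ) (2*(2*ζ+η)) * theta2 (2*τ) (2*η) -
      theta2 (2*τ) (2*(2*ζ+η)) * theta3 (2*τ) (2*η) ≠ 0 := by
    rw [← B8]; exact mul_ne_zero h1 h2
  rw [hρ, hρ, hc, hc, hc, hc, div_mul_div_comm, div_mul_div_comm]
  rw [Bnζ, Bdζ, Bnx, Bdx, B5, mul_assoc, B6, B7, mul_assoc, B8]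
  rw [div_sub_div _ _ hd1 hd2, div_eq_div_iff (mul_ne_zero hd1 hd2) (mul_ne_zero hd3 hd4)]
  ring
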